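/- Let V be a finite set, E a finite multiset of edges on V (each edge an unordered pair of distinct vertices), L a laminar family of nonempty subsets of V with |L| = |E|, f : L → ℤ with f(S) ≥ 1 for all S ∈ L, and x : E → ℝ with 0 < x_e < 1/2 for all e such that x(δ(S)) = f(S) for every S ∈ L and the characteristic vectors χ(δ(S)), S ∈ L, are linearly independent in ℝ^E. For S ∈ L let α(S) be the number of sets of L contained in S (including S itself) and let β(S) be the number of edges of E with both endpoints in S. Then for every S ∈ L, f(S) ≥ α(S) − β(S). -/

import Mathlib

open Finset

/-- `δ(T)`: the indices of edges with exactly one endpoint in `T`. Edges are given as an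
indexed family with endpoint maps `a b : ι → V`. -/
def cutEdges {V ι : Type*} [DecidableEq V] [Fintype ι] (a b : ι → V) (T : Finset V) :
    Finset ι :=
  Finset.univ.filter (fun i => ¬((a i ∈ T) ↔ (b i ∈ T)))

/-- `x(δ(T)) = Σ_{e ∈ δ(T)} x_e`. -/
def xCut {V ι : Type*} [DecidableEq V] [Fintype ι] (a b : ι → V) (x : ι → ℝ)
    (T : Finset V) : ℝ :=
  ∑ i ∈ cutEdges a b T, x i

/-- `χ(δ(T)) ∈ {0,1}^E`, the characteristic vector of `δ(T)`. -/
def chiCut {V ι : Type*} [DecidableEq V] [Fintype ι] [DecidableEq ι] (a b : ι → V)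
    (T : Finset V) : ι → ℝ :=
  fun i => if i ∈ cutEdges a b T then 1 else 0

/-- `α(S)`: the number of members of `L` contained in `S` (including `S` itself when
`S ∈ L`). -/
def alphaCount {V : Type*} [DecidableEq V] (L : Finset (Finset V)) (S : Finset V) : ℕ :=
  (L.filter (fun T => T ⊆ S)).card

/-- `β(S)`: the number of edges with both endpoints in `S`. -/
def betaCount {V ι : Type*} [DecidableEq V] [Fintype ι] (a b : ι → V)
    (S : Finset V) : ℕ :=
  (Finset.univ.filter (fun i => a i ∈ S ∧ b i ∈ S)).card

section Helpers

variable {V ι : Type*} [DecidableEq V] [Fintype ι] [DecidableEq ι]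

/-- edges with both endpoints in `S` -/
def insideEdges (a b : ι → V) (S : Finset V) : Finset ι :=
  Finset.univ.filter (fun i => a i ∈ S ∧ b i ∈ S)

/-- the maximal members of `L` properly contained in `S` -/
def childrenOf (L : Finset (Finset V)) (S : Finset V) : Finset (Finset V) :=
  L.filter (fun T => T ⊂ S ∧ ∀ U ∈ L, U ⊂ S → ¬ T ⊂ U)

lemma children_mem {L : Finset (Finset V)} {S C : Finset V} (h : C ∈ childrenOf L S) :
    C ∈ L ∧ C ⊂ S ∧ ∀ U ∈ L, U ⊂ S → ¬ C ⊂ U := by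
  simpa [childrenOf] using h

lemma child_exists {L : Finset (Finset V)} {S T : Finset V}
    (hT : T ∈ L) (hTS : T ⊂ S) : ∃ C ∈ childrenOf L S, T ⊆ C := by
  classical
  set A := L.filter (fun U => T ⊆ U ∧ U ⊂ S) with hA
  have hTA : T ∈ A := by simp [hA, hT, hTS]
  obtain ⟨C, hCA, hmax⟩ := A.exists_max_image (fun U => U.card) ⟨T, hTA⟩
  have hC : C ∈ L ∧ T ⊆ C ∧ C ⊂ S := by simpa [hA] using hCA
  refine ⟨C, ?_, hC.2.1⟩
  simp only [childrenOf, mem_filter]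
  refine ⟨hC.1, hC.2.2, ?_⟩
  intro U hU hUS hCU
  have hUA : U ∈ A := by simp [hA, hU, hUS, hC.2.1.trans hCU.subset]
  exact absurd (hmax U hUA) (not_le.mpr (card_lt_card hCU))

lemma children_disjoint {L : Finset (Finset V)}
    (hlam : ∀ S ∈ L, ∀ T ∈ L, Disjoint S T ∨ S ⊆ T ∨ T ⊆ S)
    {S C C' : Finset V} (hC : C ∈ childrenOf L S) (hC' : C' ∈ childrenOf L S)
    (hne : C ≠ C') : Disjoint C C' := by
  obtain ⟨hCL, hCS, hCmax⟩ := children_mem hC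
  obtain ⟨hCL', hCS', hCmax'⟩ := children_mem hC'
  rcases hlam C hCL C' hCL' with h | h | h
  · exact h
  · exact absurd (ssubset_of_subset_of_ne h hne) (by intro hh; exact hCmax C' hCL' hCS' hh)
  · exact absurd (ssubset_of_subset_of_ne h hne.symm) (by intro hh; exact hCmax' C hCL hCS hh)

lemma children_vertex {L : Finset (Finset V)}
    (hlam : ∀ S ∈ L, ∀ T ∈ L, Disjoint S T ∨ S ⊆ T ∨ T ⊆ S)
    (S : Finset V) (v : V) :
    ((childrenOf L S).filter (fun C => v ∈ C)).card ≤ 1 := by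
  rw [card_le_one]
  intro C hC C' hC'
  simp only [mem_filter] at hC hC'
  by_contra hne
  simpa using (children_disjoint hlam hC.1 hC'.1 hne).le_bot (mem_inter.mpr ⟨hC.2, hC'.2⟩)

lemma alpha_decomp {L : Finset (Finset V)}
    (hne : ∀ S ∈ L, S.Nonempty)
    (hlam : ∀ S ∈ L, ∀ T ∈ L, Disjoint S T ∨ S ⊆ T ∨ T ⊆ S)
    {S : Finset V} (hS : S ∈ L) :
    alphaCount L S = 1 + ∑ C ∈ childrenOf L S, alphaCount L C := by
  classical
  have hset : L.filter (fun T => T ⊆ S) =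
      insert S ((childrenOf L S).biUnion (fun C => L.filter (fun T => T ⊆ C))) := by
    ext T
    simp only [mem_filter, mem_insert, mem_biUnion]
    constructor
    · rintro ⟨hT, hTS⟩
      by_cases h : T = S
      · exact Or.inl h
      · obtain ⟨C, hC, hTC⟩ := child_exists hT (ssubset_of_subset_of_ne hTS h)
        exact Or.inr ⟨C, hC, hT, hTC⟩
    · rintro (rfl | ⟨C, hC, hT, hTC⟩)
      · exact ⟨hS, subset_rfl⟩
      · exact ⟨hT, hTC.trans (children_mem hC).2.1.subset⟩
  have hnotmem : S ∉ (childrenOf L S).biUnion (fun C => L.filter (fun T => T ⊆ C)) := by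
    simp only [mem_biUnion, mem_filter, not_exists]
    rintro C ⟨hC, -, hSC⟩
    exact absurd (hSC.trans_ssubset (children_mem hC).2.1) (lt_irrefl S)
  have hdisj : ∀ C ∈ childrenOf L S, ∀ C' ∈ childrenOf L S, C ≠ C' →
      Disjoint (L.filter (fun T => T ⊆ C)) (L.filter (fun T => T ⊆ C')) := by
    intro C hC C' hC' hCC'
    rw [disjoint_left]
    rintro T hT hT'
    simp only [mem_filter] at hT hT'
    obtain ⟨v, hv⟩ := hne T hT.1
    simpa using (children_disjoint hlam hC hC' hCC').le_bot (mem_inter.mpr ⟨hT.2 hv, hT'.2 hv⟩)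
  rw [alphaCount, hset, card_insert_of_notMem hnotmem, card_biUnion hdisj]
  rw [Nat.add_comm]
  rfl

lemma inside_mono (a b : ι → V) {S T : Finset V} (h : S ⊆ T) :
    insideEdges a b S ⊆ insideEdges a b T := by
  intro i hi
  simp only [insideEdges, mem_filter, mem_univ, true_and] at *
  exact ⟨h hi.1, h hi.2⟩

lemma beta_decomp {L : Finset (Finset V)} (a b : ι → V)
    (hlam : ∀ S ∈ L, ∀ T ∈ L, Disjoint S T ∨ S ⊆ T ∨ T ⊆ S)
    {S : Finset V} :
    betaCount a b S =
      (insideEdges a b S \ (childrenOf L S).biUnion (insideEdges a b)).card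
        + ∑ C ∈ childrenOf L S, betaCount a b C := by
  classical
  have hsub : (childrenOf L S).biUnion (insideEdges a b) ⊆ insideEdges a b S := by
    intro i hi
    obtain ⟨C, hC, hiC⟩ := mem_biUnion.mp hi
    exact inside_mono a b (children_mem hC).2.1.subset hiC
  have hdisj : ∀ C ∈ childrenOf L S, ∀ C' ∈ childrenOf L S, C ≠ C' →
      Disjoint (insideEdges a b C) (insideEdges a b C') := by
    intro C hC C' hC' hCC'
    rw [disjoint_left]
    intro i hi hi'
    simp only [insideEdges, mem_filter, mem_univ, true_and] at hi hi'
    simpa using (children_disjoint hlam hC hC' hCC').le_bot (mem_inter.mpr ⟨hi.1, hi'.1⟩)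
  have h1 : betaCount a b S = (insideEdges a b S).card := rfl
  have h2 : ∀ C : Finset V, betaCount a b C = (insideEdges a b C).card := fun _ => rfl
  rw [h1, ← card_sdiff_add_card_eq_card hsub, card_biUnion hdisj]
  simp [h2]

end Helpers

/-- Under Jain's setup with `0 < x_e < 1/2` for all edges, every `S ∈ L` satisfies
`f(S) ≥ α(S) - β(S)`. -/


theorem stmt10 {V ι : Type*} [Fintype V] [DecidableEq V] [Fintype ι] [DecidableEq ι]
    (a b : ι → V) (hab : ∀ i, a i ≠ b i)
    (L : Finset (Finset V))
    (hne : ∀ S ∈ L, S.Nonempty)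
    (hlam : ∀ S ∈ L, ∀ T ∈ L, Disjoint S T ∨ S ⊆ T ∨ T ⊆ S)
    (hcard : L.card = Fintype.card ι)
    (f : Finset V → ℤ) (hf : ∀ S ∈ L, 1 ≤ f S)
    (x : ι → ℝ) (hx : ∀ i, 0 < x i ∧ x i < 1 / 2)
    (heq : ∀ S ∈ L, xCut a b x S = f S)
    (hind : LinearIndependent ℝ (fun S : {T // T ∈ L} => chiCut a b S.val)) :
    ∀ S ∈ L, (alphaCount L S : ℤ) - (betaCount a b S : ℤ) ≤ f S := by
  classical
  suffices H : ∀ n : ℕ, ∀ S : Finset V, S ∈ L → S.card ≤ n →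
      (alphaCount L S : ℤ) - (betaCount a b S : ℤ) ≤ f S by
    intro S hS; exact H S.card S hS le_rfl
  intro n
  induction n with
  | zero =>
    intro S hS hc
    obtain ⟨v, hv⟩ := hne S hS
    simp [Finset.card_eq_zero] at hc
    simp [hc] at hv
  | succ n ih =>
    intro S hS hcardS
    set ch := childrenOf L S with hch
    -- number of children cutting edge i
    set k : ι → ℕ := fun i => (ch.filter (fun C => i ∈ cutEdges a b C)).card with hk
    set M : Finset ι := (insideEdges a b S).filter
      (fun i => ∃ C ∈ ch, i ∈ cutEdges a b C) with hM
    set M' : Finset ι := insideEdges a b S \ ch.biUnion (insideEdges a b) with hM'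
    set g : ℤ := ∑ C ∈ ch, f C with hg
    -- basic membership facts
    have hcut_mem : ∀ (T : Finset V) (i : ι),
        i ∈ cutEdges a b T ↔ ¬((a i ∈ T) ↔ (b i ∈ T)) := by
      intro T i; simp [cutEdges]
    have hin_mem : ∀ (T : Finset V) (i : ι),
        i ∈ insideEdges a b T ↔ (a i ∈ T ∧ b i ∈ T) := by
      intro T i; simp [insideEdges]
    -- each vertex is in at most one child; endpoint facts
    have hk_le_two : ∀ i, k i ≤ 2 := by
      intro i
      have hsub : ch.filter (fun C => i ∈ cutEdges a b C) ⊆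
          ch.filter (fun C => a i ∈ C) ∪ ch.filter (fun C => b i ∈ C) := by
        intro C hC
        simp only [mem_filter, mem_union] at *
        rcases hC with ⟨hC, hcut⟩
        rw [hcut_mem] at hcut
        by_cases ha : a i ∈ C
        · exact Or.inl ⟨hC, ha⟩
        · refine Or.inr ⟨hC, ?_⟩; tauto
      calc k i ≤ (ch.filter (fun C => a i ∈ C) ∪ ch.filter (fun C => b i ∈ C)).card :=
            card_le_card hsub
        _ ≤ (ch.filter (fun C => a i ∈ C)).card + (ch.filter (fun C => b i ∈ C)).card :=
            card_union_le _ _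
        _ ≤ 2 := by
            have hva := children_vertex hlam (L := L) S (a i)
            have hvb := children_vertex hlam (L := L) S (b i)
            rw [← hch] at hva hvb
            omega
    have hk_cut : ∀ i, i ∈ cutEdges a b S → k i ≤ 1 := by
      intro i hi
      rw [hcut_mem] at hi
      -- one endpoint is in S, one is not
      have key : ∀ v w : V, v ∉ S → (¬((v ∈ S) ↔ (w ∈ S))) →
          (ch.filter (fun C => ¬((v ∈ C) ↔ (w ∈ C)))).card ≤ 1 := by
        intro v w hv hvw
        have hsub : ch.filter (fun C => ¬((v ∈ C) ↔ (w ∈ C))) ⊆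
            ch.filter (fun C => w ∈ C) := by
          intro C hC
          simp only [mem_filter] at *
          rcases hC with ⟨hC, hcut⟩
          have hCS := (children_mem hC).2.1.subset
          have : v ∉ C := fun hvC => hv (hCS hvC)
          refine ⟨hC, ?_⟩; tauto
        exact le_trans (card_le_card hsub) (children_vertex hlam (L := L) S w)
      by_cases ha : a i ∈ S
      · have hb : b i ∉ S := by tauto
        have hfe : ch.filter (fun C => i ∈ cutEdges a b C)
            = ch.filter (fun C => ¬((b i ∈ C) ↔ (a i ∈ C))) := by
          apply filter_congr
          intro C _
          simp only [hcut_mem]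
          constructor <;> (intro h; tauto)
        have hle := key (b i) (a i) hb (by tauto)
        simp only [hk, hfe]
        exact hle
      · have hfe : ch.filter (fun C => i ∈ cutEdges a b C)
            = ch.filter (fun C => ¬((a i ∈ C) ↔ (b i ∈ C))) := by
          apply filter_congr
          intro C _
          simp only [hcut_mem]
        have hle := key (a i) (b i) ha hi
        simp only [hk, hfe]
        exact hle
    have hk_endpoint : ∀ i, 0 < k i → (a i ∈ S ∨ b i ∈ S) := by
      intro i hki
      rw [hk, card_pos] at hki
      obtain ⟨C, hC⟩ := hki
      simp only [mem_filter, hcut_mem] at hC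
      have hCS := (children_mem hC.1).2.1.subset
      by_cases ha : a i ∈ C
      · exact Or.inl (hCS ha)
      · have : b i ∈ C := by tauto
        exact Or.inr (hCS this)
    -- M ⊆ M'
    have hMM' : M ⊆ M' := by
      intro i hi
      simp only [hM, mem_filter] at hi
      obtain ⟨hin, C, hC, hcutC⟩ := hi
      simp only [hM', mem_sdiff, mem_biUnion, not_exists]
      refine ⟨hin, ?_⟩
      rintro C' ⟨hC', hin'⟩
      rw [hin_mem] at hin'
      rw [hcut_mem] at hcutC
      by_cases hCC' : C = C'
      · subst hCC'; tauto
      · have hd := children_disjoint hlam hC hC' hCC'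
        have : a i ∈ C ∨ b i ∈ C := by tauto
        rcases this with h | h
        · simpa using hd.le_bot (mem_inter.mpr ⟨h, hin'.1⟩)
        · simpa using hd.le_bot (mem_inter.mpr ⟨h, hin'.2⟩)
    -- the sum formula
    have hswap : ∑ C ∈ ch, xCut a b x C = ∑ i : ι, (k i : ℝ) * x i := by
      have h1 : ∀ C : Finset V, xCut a b x C
          = ∑ i : ι, if i ∈ cutEdges a b C then x i else 0 := by
        intro C
        rw [xCut]
        rw [Finset.sum_ite_mem]
        rw [Finset.univ_inter]
      calc ∑ C ∈ ch, xCut a b x C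
          = ∑ C ∈ ch, ∑ i : ι, if i ∈ cutEdges a b C then x i else 0 := by
            exact Finset.sum_congr rfl fun C _ => h1 C
        _ = ∑ i : ι, ∑ C ∈ ch, if i ∈ cutEdges a b C then x i else 0 :=
            Finset.sum_comm
        _ = ∑ i : ι, (k i : ℝ) * x i := by
            refine Finset.sum_congr rfl fun i _ => ?_
            rw [Finset.sum_ite, Finset.sum_const_zero, add_zero, Finset.sum_const,
              nsmul_eq_mul]
    have hfS : (f S : ℝ) = ∑ i : ι, (if i ∈ cutEdges a b S then (1:ℝ) else 0) * x i := by
      rw [← heq S hS, xCut]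
      have h0 : ∑ i ∈ cutEdges a b S, x i
          = ∑ i : ι, if i ∈ cutEdges a b S then x i else 0 := by
        rw [Finset.sum_ite_mem, Finset.univ_inter]
      rw [h0]
      refine Finset.sum_congr rfl fun i _ => ?_
      by_cases h : i ∈ cutEdges a b S <;> simp [h]
    have hgR : (g : ℝ) = ∑ i : ι, (k i : ℝ) * x i := by
      rw [hg, ← hswap]
      push_cast
      exact Finset.sum_congr rfl fun C hC => (heq C (children_mem hC).1).symm
    have hmain : (f S : ℝ) - (g : ℝ)
        = ∑ i : ι, ((if i ∈ cutEdges a b S then (1:ℝ) else 0) - (k i : ℝ)) * x i := by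
      rw [hfS, hgR, ← Finset.sum_sub_distrib]
      refine Finset.sum_congr rfl fun i _ => ?_
      ring
    -- pointwise bound
    have hpt : ∀ i, i ∉ M →
        (0:ℝ) ≤ ((if i ∈ cutEdges a b S then (1:ℝ) else 0) - (k i : ℝ)) := by
      intro i hiM
      by_cases hki : k i = 0
      · rw [hki]; by_cases h : i ∈ cutEdges a b S <;> simp [h]
      · have hkpos : 0 < k i := Nat.pos_of_ne_zero hki
        -- some child cuts i, i ∉ M so i is not inside S, hence i crosses S
        have hnotin : i ∉ insideEdges a b S := by
          intro hin
          apply hiM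
          simp only [hM, mem_filter]
          refine ⟨hin, ?_⟩
          simp only [hk] at hkpos
          obtain ⟨C, hC⟩ := card_pos.mp hkpos
          simp only [mem_filter] at hC
          exact ⟨C, hC.1, hC.2⟩
        have hend := hk_endpoint i hkpos
        have hcutS : i ∈ cutEdges a b S := by
          rw [hcut_mem]
          rw [hin_mem] at hnotin
          tauto
        have := hk_cut i hcutS
        simp only [hcutS, if_pos]
        have : (k i : ℝ) ≤ 1 := by exact_mod_cast this
        linarith
    have hlb : ∀ i : ι, ((if i ∈ cutEdges a b S then (1:ℝ) else 0) - (k i : ℝ)) * x i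
        ≥ -2 * (if i ∈ M then x i else 0) := by
      intro i
      by_cases hiM : i ∈ M
      · simp only [hiM, if_pos]
        have h2 : ((k i : ℝ)) ≤ 2 := by exact_mod_cast hk_le_two i
        have hx0 := (hx i).1
        have h01 : (0:ℝ) ≤ (if i ∈ cutEdges a b S then (1:ℝ) else 0) := by
          split <;> norm_num
        have hnn : (0:ℝ) ≤ ((if i ∈ cutEdges a b S then (1:ℝ) else 0) - (k i : ℝ) + 2) * x i :=
          mul_nonneg (by linarith) hx0.le
        nlinarith
      · simp only [hiM, if_neg, not_false_iff, mul_zero]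
        have := hpt i hiM
        have hx0 := (hx i).1
        have : (0:ℝ) ≤ ((if i ∈ cutEdges a b S then (1:ℝ) else 0) - (k i : ℝ)) * x i :=
          mul_nonneg this hx0.le
        linarith
    -- key quantitative bound: f S ≥ g + 1 - |M'|
    have hkey : g + 1 - (M'.card : ℤ) ≤ f S := by
      by_cases hMemp : M.Nonempty
      · -- f S - g ≥ -2 Σ_{i∈M} x i > -|M|
        have h1 : (f S : ℝ) - g ≥ -2 * ∑ i ∈ M, x i := by
          rw [hmain]
          calc ∑ i : ι, ((if i ∈ cutEdges a b S then (1:ℝ) else 0) - (k i : ℝ)) * x i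
              ≥ ∑ i : ι, -2 * (if i ∈ M then x i else 0) :=
                Finset.sum_le_sum fun i _ => hlb i
            _ = -2 * ∑ i : ι, (if i ∈ M then x i else 0) := by
                rw [Finset.mul_sum]
            _ = -2 * ∑ i ∈ M, x i := by
                rw [Finset.sum_ite_mem, Finset.univ_inter]
        have h2 : ∑ i ∈ M, x i < (M.card : ℝ) * (1/2) := by
          calc ∑ i ∈ M, x i < ∑ _i ∈ M, (1/2 : ℝ) :=
                Finset.sum_lt_sum_of_nonempty hMemp fun i _ => (hx i).2
            _ = (M.card : ℝ) * (1/2) := by rw [Finset.sum_const, nsmul_eq_mul]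
        have h3 : (f S : ℝ) - g > -(M.card : ℝ) := by linarith
        have h4 : (f S : ℤ) - g > -(M.card : ℤ) := by exact_mod_cast h3
        have h5 : (M.card : ℤ) ≤ (M'.card : ℤ) := by
          exact_mod_cast card_le_card hMM'
        omega
      · -- M empty: all terms nonneg, so f S - g ≥ 0; rule out equality
        have hallpt : ∀ i : ι,
            (0:ℝ) ≤ ((if i ∈ cutEdges a b S then (1:ℝ) else 0) - (k i : ℝ)) := by
          intro i
          exact hpt i (fun hi => hMemp ⟨i, hi⟩)
        have hnonneg : (0:ℝ) ≤ (f S : ℝ) - g := by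
          rw [hmain]
          exact Finset.sum_nonneg fun i _ => mul_nonneg (hallpt i) (hx i).1.le
        have hZnonneg : (0:ℤ) ≤ f S - g := by exact_mod_cast hnonneg
        rcases eq_or_lt_of_le hZnonneg with heq0 | hlt
        · -- equality: contradiction with linear independence
          exfalso
          have hsum0 : (0:ℝ) = (f S : ℝ) - g := by exact_mod_cast heq0
          have hterm0 : ∀ i : ι,
              ((if i ∈ cutEdges a b S then (1:ℝ) else 0) - (k i : ℝ)) * x i = 0 := by
            intro i
            have := Finset.sum_eq_zero_iff_of_nonneg
              (fun i (_ : i ∈ Finset.univ) => mul_nonneg (hallpt i) (hx i).1.le)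
            rw [hmain] at hsum0
            exact (this.mp hsum0.symm) i (Finset.mem_univ i)
          have hchi : ∀ i : ι, (if i ∈ cutEdges a b S then (1:ℝ) else 0) = (k i : ℝ) := by
            intro i
            have h := hterm0 i
            have hx0 : x i ≠ 0 := ne_of_gt (hx i).1
            have := mul_eq_zero.mp h
            rcases this with h' | h'
            · linarith [sub_eq_zero.mp h']
            · exact absurd h' hx0
          -- χ(δS) = Σ_{C ∈ ch} χ(δC)
          have hchifun : chiCut a b S = ∑ C ∈ ch, chiCut a b C := by
            funext i
            have : (∑ C ∈ ch, chiCut a b C) i = ∑ C ∈ ch, (if i ∈ cutEdges a b C then (1:ℝ) else 0) := by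
              simp [chiCut]
            rw [this, Finset.sum_boole]
            exact (hchi i).trans (by norm_num [hk])
          -- Build the vanishing linear combination
          set w : Finset V → ℝ := fun T => if T = S then 1 else if T ∈ ch then -1 else 0
            with hw
          have hcomb : ∑ T : {T // T ∈ L}, w T.val • chiCut a b T.val = 0 := by
            rw [Finset.univ_eq_attach,
              Finset.sum_attach L (fun T => w T • chiCut a b T),
              ← Finset.add_sum_erase L (fun T => w T • chiCut a b T) hS]
            have h1 : w S = 1 := by simp [hw]
            have h2 : ∑ T ∈ L.erase S, w T • chiCut a b T
                = ∑ T ∈ ch, (-1 : ℝ) • chiCut a b T := by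
              rw [← Finset.sum_filter_add_sum_filter_not (L.erase S) (fun T => T ∈ ch)]
              have h3 : ∑ T ∈ (L.erase S).filter (fun T => T ∉ ch),
                  w T • chiCut a b T = 0 := by
                apply Finset.sum_eq_zero
                intro T hT
                simp only [mem_filter, mem_erase] at hT
                have : w T = 0 := by simp [hw, hT.1.1, hT.2]
                simp [this]
              have h4 : (L.erase S).filter (fun T => T ∈ ch) = ch := by
                ext T
                simp only [mem_filter, mem_erase]
                constructor
                · rintro ⟨_, hT⟩; exact hT
                · intro hT
                  have hTL := (children_mem hT).1
                  have hTS := (children_mem hT).2.1.ne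
                  exact ⟨⟨hTS, hTL⟩, hT⟩
              rw [h3, add_zero, h4]
              refine Finset.sum_congr rfl fun T hT => ?_
              have : w T = -1 := by
                have hTS := (children_mem hT).2.1.ne
                simp [hw, hTS, hT]
              rw [this]
            rw [h1, h2, one_smul]
            simp only [neg_smul, one_smul, Finset.sum_neg_distrib]
            rw [hchifun]
            abel
          have := (Fintype.linearIndependent_iff.mp hind)
            (fun T => w T.val) (by convert hcomb) ⟨S, hS⟩
          simp [hw] at this
        · omega
    -- finish with induction hypothesis and decompositions
    have halpha := alpha_decomp hne hlam hS
    have hbeta := beta_decomp (L := L) a b hlam (S := S)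
    have hih : ∀ C ∈ ch, (alphaCount L C : ℤ) - (betaCount a b C : ℤ) ≤ f C := by
      intro C hC
      have hCL := (children_mem hC).1
      have hclt : C.card < S.card := card_lt_card (children_mem hC).2.1
      exact ih C hCL (by omega)
    have hsum_le : ∑ C ∈ ch, ((alphaCount L C : ℤ) - (betaCount a b C : ℤ)) ≤ g := by
      rw [hg]
      exact Finset.sum_le_sum hih
    have : (alphaCount L S : ℤ) - (betaCount a b S : ℤ)
        = 1 - (M'.card : ℤ) + ∑ C ∈ ch, ((alphaCount L C : ℤ) - (betaCount a b C : ℤ)) := by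
      rw [halpha, hbeta]
      push_cast
      rw [Finset.sum_sub_distrib]
      rw [← hch, ← hM']
      ring_nf
    omega
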